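/- For every circuit C of the quiver Q (an equivalence class of cycles under rotation), the restricted difference formula holds: if C is a non-trivial circuit then |(Q_1 ⊙ B)_C| − |(Q_0 ⊙ B)_C| = w_C, where w_C = |W ∩ C|. -/

import Mathlib

/-!  Basic combinatorics of a quiver given by source/target maps `s t : A → V`.
A path of positive length is a list of arrows `[a₁, …, aₙ]` written in order of
traversal (so the written path `aₙ … a₁` of the paper corresponds to the list
`[a₁, …, aₙ]`).  -/

namespace Monomial

variable {V A : Type*}

/-- `l` is a path: consecutive arrows are composable. -/
def IsPath (s t : A → V) (l : List A) : Prop := l.Chain' fun a b => t a = s b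

/-- Source of a (nonempty) path. -/
def srcOf (s : A → V) (l : List A) : Option V := l.head?.map s

/-- Target of a (nonempty) path. -/
def tgtOf (t : A → V) (l : List A) : Option V := l.getLast?.map t

/-- `l` is a nontrivial cycle. -/
def IsCycleList (s t : A → V) (l : List A) : Prop :=
  l ≠ [] ∧ IsPath s t l ∧ tgtOf t l = srcOf s l

/-- `Z` is a minimal set of path relations of length at least two. -/
def MinimalRels (s t : A → V) (Z : Set (List A)) : Prop :=
  ∀ z ∈ Z, IsPath s t z ∧ 2 ≤ z.length ∧ ∀ w ∈ Z, w <:+: z → w = z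

/-- `l` belongs to `B`: it is a path containing no subpath from `Z`
(the basis of the monomial algebra, positive length part). -/
def InB (s t : A → V) (Z : Set (List A)) (l : List A) : Prop :=
  IsPath s t l ∧ ∀ z ∈ Z, ¬ z <:+: l

/-- `(a, β)` is a cyclic pair in `Q₁ ⊙ B` (if `β = []` it stands for the
trivial path at `s a = t a`). -/
def PairOK (s t : A → V) (Z : Set (List A)) (p : A × List A) : Prop :=
  InB s t Z p.2 ∧ IsCycleList s t (p.2 ++ [p.1])

/-- The set `W` of cycles containing precisely one subpath from `Z`,
located at their end (for a written cycle `γ = ξα`, the list is `α ++ ξ`). -/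
def InW (s t : A → V) (Z : Set (List A)) (l : List A) : Prop :=
  IsCycleList s t l ∧
    ∃ ξ ∈ Z, (∃ α, l = α ++ ξ) ∧ ∀ z ∈ Z, ∀ p q, l = p ++ z ++ q → z = ξ ∧ q = []

/-- Two cycles are in the same circuit iff they are related by rotation. -/
def RotEquiv (l₁ l₂ : List A) : Prop := ∃ n, l₁.rotate n = l₂

end Monomial


namespace CircuitProofAux

open Monomial

variable {V A : Type*} {s t : A → V} {Z : Set (List A)}

/-- Two elements of `Z` that are both suffixes of the same list coincide. -/
lemma suffix_eq_of_mem (hZ : MinimalRels s t Z) {z z' l : List A}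
    (hz : z ∈ Z) (hz' : z' ∈ Z) (h1 : z <:+ l) (h2 : z' <:+ l) : z = z' := by
  rcases List.suffix_or_suffix_of_suffix h1 h2 with h | h
  · exact (hZ z' hz').2.2 z hz h.isInfix
  · exact ((hZ z hz).2.2 z' hz' h.isInfix).symm

/-- If `l.dropLast` contains no element of `Z` and `l = p ++ z ++ q` with
`z ∈ Z`, then `q = []`. -/
lemma q_eq_nil {l z p q : List A} (hB : ∀ w ∈ Z, ¬ w <:+: l.dropLast)
    (hz : z ∈ Z) (he : l = p ++ z ++ q) : q = [] := by
  by_contra hq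
  apply hB z hz
  refine ⟨p, q.dropLast, ?_⟩
  have : l.dropLast = (p ++ z) ++ q.dropLast := by
    rw [he, List.dropLast_append_of_ne_nil hq]
  rw [this, List.append_assoc]

end CircuitProofAux

open Monomial in
/-- for every non-trivial circuit `C` (the rotation class of a
nontrivial cycle `γ`) we have `|(Q₁ ⊙ B)_C| − |(Q₀ ⊙ B)_C| = w_C = |W ∩ C|`
(stated additively to avoid truncated subtraction). -/
theorem circuit_difference {V A : Type*} (s t : A → V) (Z : Set (List A))
    (hZ : MinimalRels s t Z) (γ : List A) (hγ : IsCycleList s t γ)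
    (DomC : Set (List A))
    (hDomC : DomC = {l | IsCycleList s t l ∧ InB s t Z l ∧ RotEquiv l γ})
    (CodC : Set (A × List A))
    (hCodC : CodC = {p | PairOK s t Z p ∧ RotEquiv (p.2 ++ [p.1]) γ})
    (WC : Set (List A))
    (hWC : WC = {l | InW s t Z l ∧ RotEquiv l γ})
    (hDomFin : DomC.Finite) (hCodFin : CodC.Finite) (hWFin : WC.Finite) :
    CodC.ncard = DomC.ncard + WC.ncard := by
  
  classical
  subst hDomC hCodC hWC
  set f : A × List A → List A := fun p => p.2 ++ [p.1] with hf
  have hinj : Function.Injective f := by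
    rintro ⟨a, b⟩ ⟨c, d⟩ h
    simp only [hf] at h
    obtain ⟨h1, h2⟩ := List.append_inj' h (by simp)
    simp only [List.cons.injEq, and_true] at h2
    simp [h1, h2]
  have hdisj : Disjoint {l | IsCycleList s t l ∧ InB s t Z l ∧ RotEquiv l γ}
      {l | InW s t Z l ∧ RotEquiv l γ} := by
    rw [Set.disjoint_left]
    rintro l ⟨_, hB, _⟩ ⟨⟨_, ξ, hξ, ⟨α, hα⟩, _⟩, _⟩
    exact hB.2 ξ hξ ⟨α, [], by simp [hα]⟩
  have key : f '' {p | PairOK s t Z p ∧ RotEquiv (p.2 ++ [p.1]) γ}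
      = {l | IsCycleList s t l ∧ InB s t Z l ∧ RotEquiv l γ}
        ∪ {l | InW s t Z l ∧ RotEquiv l γ} := by
    ext l
    constructor
    · rintro ⟨⟨a, β⟩, ⟨⟨hβB, hcyc⟩, hrot⟩, rfl⟩
      simp only [hf] at hcyc hrot ⊢
      have hdl : (β ++ [a]).dropLast = β := by simp
      have hnoZ : ∀ w ∈ Z, ¬ w <:+: (β ++ [a]).dropLast := by
        rw [hdl]; exact hβB.2
      by_cases hcase : ∀ z ∈ Z, ¬ z <:+: (β ++ [a])
      · exact Or.inl ⟨hcyc, ⟨hcyc.2.1, hcase⟩, hrot⟩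
      · right
        push_neg at hcase
        obtain ⟨ξ, hξZ, p, q, hpq⟩ := hcase
        have hq : q = [] :=
          CircuitProofAux.q_eq_nil hnoZ hξZ (by rw [← hpq, List.append_assoc])
        subst hq
        have hξsuf : ξ <:+ (β ++ [a]) := ⟨p, by simpa using hpq⟩
        refine ⟨⟨hcyc, ξ, hξZ, ⟨p, by simpa using hpq.symm⟩, ?_⟩, hrot⟩
        intro z hz p' q' he
        have hq' : q' = [] := CircuitProofAux.q_eq_nil hnoZ hz he
        subst hq'
        have hzsuf : z <:+ (β ++ [a]) := ⟨p', by simpa using he.symm⟩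
        exact ⟨CircuitProofAux.suffix_eq_of_mem hZ hz hξZ hzsuf hξsuf, rfl⟩
    · intro hl
      have hcyc : IsCycleList s t l := by
        rcases hl with ⟨h, _, _⟩ | ⟨⟨h, _⟩, _⟩ <;> exact h
      have hne : l ≠ [] := hcyc.1
      have hrot : RotEquiv l γ := by
        rcases hl with ⟨_, _, h⟩ | ⟨_, h⟩ <;> exact h
      have hsplit : l.dropLast ++ [l.getLast hne] = l :=
        List.dropLast_append_getLast hne
      have hpath : IsPath s t l.dropLast :=
        hcyc.2.1.prefix l.dropLast_prefix
      have hnoZ : ∀ w ∈ Z, ¬ w <:+: l.dropLast := by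
        rcases hl with ⟨_, hB, _⟩ | ⟨⟨_, ξ, hξZ, _, huniq⟩, _⟩
        · intro w hw hinf
          exact hB.2 w hw (hinf.trans l.dropLast_prefix.isInfix)
        · rintro w hw ⟨p, q, hpq⟩
          have : l = p ++ w ++ (q ++ [l.getLast hne]) := by
            rw [← List.append_assoc, hpq, hsplit]
          exact absurd (huniq w hw p _ this).2 (by simp)
      refine ⟨(l.getLast hne, l.dropLast), ⟨⟨⟨hpath, hnoZ⟩, ?_⟩, ?_⟩, ?_⟩
      · simpa [hsplit] using hcyc
      · simpa [hsplit] using hrot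
      · simpa [hf] using hsplit
  calc ({p | PairOK s t Z p ∧ RotEquiv (p.2 ++ [p.1]) γ} : Set (A × List A)).ncard
      = (f '' {p | PairOK s t Z p ∧ RotEquiv (p.2 ++ [p.1]) γ}).ncard :=
        (Set.ncard_image_of_injective _ hinj).symm
    _ = ({l | IsCycleList s t l ∧ InB s t Z l ∧ RotEquiv l γ}
          ∪ {l | InW s t Z l ∧ RotEquiv l γ}).ncard := by rw [key]
    _ = _ := Set.ncard_union_eq hdisj hDomFin hWFin
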